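/- Let u₁, ..., u_n be unit vectors in ℝ^N whose average z satisfies |z| ≤ 1 − 2b with b ∈ (0, 1/2), and suppose for some index i that the set A = { l : ⟨uᵢ, u_l⟩ > 1 − b } satisfies #A ≥ (1 − B)·n with B = b/(4 − 2b). Then |z| ≥ (2 − b)(1 − B) − 1 = 1 − (3/2)b, a contradiction; hence no such index i exists. -/
import Mathlib


open RealInnerProductSpace

theorem no_large_aligned_set
    (N n : ℕ) (hn : 0 < n) (b : ℝ) (hb : 0 < b) (hb' : b < 1/2)
    (u : Fin n → EuclideanSpace ℝ (Fin N)) (hu : ∀ i, ‖u i‖ = 1)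
    (hz : ‖((n : ℝ))⁻¹ • ∑ l, u l‖ ≤ 1 - 2 * b)
    (i : Fin n)
    (hA : (1 - b / (4 - 2 * b)) * n ≤
        ((Finset.univ.filter (fun l : Fin n => 1 - b < ⟪u i, u l⟫)).card : ℝ)) :
    False := by
  set A := Finset.univ.filter (fun l : Fin n => 1 - b < ⟪u i, u l⟫) with hAdef
  set Ac := Finset.univ.filter (fun l : Fin n => ¬ (1 - b < ⟪u i, u l⟫)) with hAcdef
  have hcard : A.card + Ac.card = n := by
    rw [hAdef, hAcdef, Finset.card_filter_add_card_filter_not]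
    simp
  -- lower bound on sum over A
  have h1 : (A.card : ℝ) * (1 - b) ≤ ∑ l ∈ A, ⟪u i, u l⟫ := by
    have := Finset.card_nsmul_le_sum A (fun l => ⟪u i, u l⟫) (1 - b)
      (fun l hl => by
        simp only [hAdef, Finset.mem_filter] at hl
        exact le_of_lt hl.2)
    simpa [nsmul_eq_mul] using this
  have h2 : (Ac.card : ℝ) * (-1) ≤ ∑ l ∈ Ac, ⟪u i, u l⟫ := by
    have := Finset.card_nsmul_le_sum Ac (fun l => ⟪u i, u l⟫) (-1)
      (fun l hl => by
        have habs : |⟪u i, u l⟫| ≤ 1 := by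
          have := abs_real_inner_le_norm (u i) (u l)
          simpa [hu i, hu l] using this
        linarith [neg_abs_le ⟪u i, u l⟫])
    simpa [nsmul_eq_mul] using this
  have hsplit : ∑ l ∈ A, ⟪u i, u l⟫ + ∑ l ∈ Ac, ⟪u i, u l⟫ = ∑ l, ⟪u i, u l⟫ := by
    rw [hAdef, hAcdef, Finset.sum_filter_add_sum_filter_not]
  -- upper bound via z
  have hiz : ⟪u i, ((n : ℝ))⁻¹ • ∑ l, u l⟫ ≤ 1 - 2 * b := by
    calc ⟪u i, ((n : ℝ))⁻¹ • ∑ l, u l⟫ ≤ ‖u i‖ * ‖((n : ℝ))⁻¹ • ∑ l, u l‖ :=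
          real_inner_le_norm _ _
      _ ≤ 1 - 2 * b := by rw [hu i, one_mul]; exact hz
  have hiz' : ((n : ℝ))⁻¹ * ∑ l, ⟪u i, u l⟫ ≤ 1 - 2 * b := by
    rwa [real_inner_smul_right, inner_sum] at hiz
  have hnpos : (0 : ℝ) < n := by exact_mod_cast hn
  have hS : ∑ l, ⟪u i, u l⟫ ≤ (1 - 2 * b) * n := by
    have := mul_le_mul_of_nonneg_left hiz' (le_of_lt hnpos)
    rw [← mul_assoc, mul_inv_cancel₀ (ne_of_gt hnpos), one_mul] at this
    linarith
  have h4 : (0 : ℝ) < 4 - 2 * b := by linarith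
  have hA' : (4 - 3 * b) * n ≤ (4 - 2 * b) * A.card := by
    have := mul_le_mul_of_nonneg_left hA (le_of_lt h4)
    have hne : (4 - 2 * b) ≠ 0 := ne_of_gt h4
    field_simp at this
    nlinarith [this]
  have hcard' : (Ac.card : ℝ) = n - A.card := by
    have : ((A.card + Ac.card : ℕ) : ℝ) = n := by exact_mod_cast hcard
    push_cast at this
    linarith
  nlinarith [h1, h2, hsplit, hS, hA', hcard', hnpos, mul_pos hb hnpos]
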